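/- Let F_q be a finite field with q elements, let 0 ≤ k < n, and let V be an F_q-vector space of dimension at least 2n − k. Let W_1, W_2 be n-dimensional subspaces of V with dim(W_1 ∩ W_2) = k, and set Z = W_1 ∩ W_2. Then the number of simple linear maps T : W_1 → V with image T(W_1) = W_2 equals (the number of simple linear maps S : Z → W_2, where Z is viewed as a k-dimensional subspace of the n-dimensional space W_2) multiplied by ∏_{i=k}^{n−1} (q^n − q^i). -/

import Mathlib

/-- A linear map `T : W → V` defined on a subspace `W` of `V` is *simple* if the only
`T`-invariant subspace properly contained in `V` is the zero subspace. A subspace `U` of `V`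
is `T`-invariant if `U ⊆ W` and `T(U) ⊆ U`. -/
def IsSimple {F V : Type*} [Field F] [AddCommGroup V] [Module F V]
    (W : Submodule F V) (T : W →ₗ[F] V) : Prop :=
  ∀ U : Submodule F V, U ≤ W → (∀ x : W, (x : V) ∈ U → T x ∈ U) → U ≠ ⊤ → U = ⊥

open Module LinearMap Submodule Finset

section Counting
variable {F : Type*} [Field F] [Fintype F]
variable {M N : Type*} [AddCommGroup M] [Module F M] [AddCommGroup N] [Module F N]

theorem card_inj_linearMaps [FiniteDimensional F M] [FiniteDimensional F N]
    (h : finrank F M ≤ finrank F N) :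
    Nat.card {g : M →ₗ[F] N // Function.Injective g} =
      ∏ i ∈ Finset.range (finrank F M),
        (Fintype.card F ^ finrank F N - Fintype.card F ^ i) := by
  have : Finite N := Module.finite_of_finite F
  classical
  let b : Basis (Fin (finrank F M)) F M := Module.finBasis F M
  have key : ∀ s : Fin (finrank F M) → N,
      LinearIndependent F s ↔ Function.Injective (b.constr F s) := by
    intro s
    constructor
    · intro hs
      rw [← LinearMap.ker_eq_bot, Submodule.eq_bot_iff]
      intro x hx
      have hx' : (b.constr F s) x = 0 := hx
      rw [Basis.constr_apply_fintype] at hx'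
      have hz := (Fintype.linearIndependent_iff.mp hs) _ hx'
      have : b.equivFun x = 0 := funext hz
      exact b.equivFun.map_eq_zero_iff.mp this
    · intro hinj
      have hs : s = ⇑(b.constr F s) ∘ b := by
        funext i; simp [Basis.constr_basis]
      rw [hs]
      exact b.linearIndependent.map' _ (LinearMap.ker_eq_bot.mpr hinj)
  have e : {s : Fin (finrank F M) → N // LinearIndependent F s} ≃
      {g : M →ₗ[F] N // Function.Injective g} :=
    Equiv.subtypeEquiv (b.constr F).toEquiv key
  rw [← Nat.card_congr e, card_linearIndependent h]
  exact Fin.prod_univ_eq_prod_range (fun i => Fintype.card F ^ finrank F N - Fintype.card F ^ i) _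

theorem card_comp_mkQ_inj (R : Submodule F N) :
    Nat.card {T : M →ₗ[F] N // Function.Injective (R.mkQ ∘ₗ T)} =
      Nat.card {g : M →ₗ[F] (N ⧸ R) // Function.Injective g} * Nat.card (M →ₗ[F] R) := by
  obtain ⟨σ, hσ⟩ := LinearMap.exists_rightInverse_of_surjective R.mkQ (Submodule.range_mkQ R)
  have hσ' : ∀ x, R.mkQ (σ x) = x := fun x => by
    simpa using LinearMap.congr_fun hσ x
  have hmem : ∀ (T : M →ₗ[F] N) x, (T - σ ∘ₗ R.mkQ ∘ₗ T) x ∈ R := by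
    intro T x
    rw [← Submodule.Quotient.mk_eq_zero]
    simp [← Submodule.mkQ_apply, hσ']
  let Φ : (M →ₗ[F] N) ≃ (M →ₗ[F] N ⧸ R) × (M →ₗ[F] R) :=
  { toFun := fun T => (R.mkQ ∘ₗ T, LinearMap.codRestrict R (T - σ ∘ₗ R.mkQ ∘ₗ T) (hmem T)),
    invFun := fun p => σ ∘ₗ p.1 + R.subtype ∘ₗ p.2,
    left_inv := by
      intro T; ext x; simp [hσ'],
    right_inv := by
      intro p
      refine Prod.ext ?_ ?_
      · ext x
        have h0 : R.mkQ ((p.2 x : N)) = 0 := by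
          rw [Submodule.mkQ_apply]
          exact (Submodule.Quotient.mk_eq_zero R).mpr (p.2 x).2
        simp [hσ', ← Submodule.mkQ_apply, h0]
      · ext x
        have h0 : R.mkQ ((p.2 x : N)) = 0 := by
          rw [Submodule.mkQ_apply]
          exact (Submodule.Quotient.mk_eq_zero R).mpr (p.2 x).2
        simp only [LinearMap.coe_comp, LinearMap.codRestrict_apply, LinearMap.sub_apply,
          LinearMap.add_apply, Function.comp_apply, Submodule.coe_subtype,
          ← Submodule.mkQ_apply, map_add, hσ', h0, map_zero, add_zero]
        abel }
  have e1 : {T : M →ₗ[F] N // Function.Injective (R.mkQ ∘ₗ T)} ≃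
      {p : (M →ₗ[F] N ⧸ R) × (M →ₗ[F] R) // Function.Injective p.1} :=
    Equiv.subtypeEquiv Φ (fun T => Iff.rfl)
  have e2 : {p : (M →ₗ[F] N ⧸ R) × (M →ₗ[F] R) // Function.Injective p.1} ≃
      {g : M →ₗ[F] (N ⧸ R) // Function.Injective g} × (M →ₗ[F] R) :=
  { toFun := fun p => (⟨p.1.1, p.2⟩, p.1.2),
    invFun := fun x => ⟨(x.1.1, x.2), x.1.2⟩,
    left_inv := fun _ => rfl,
    right_inv := fun _ => rfl }
  rw [Nat.card_congr (e1.trans e2), Nat.card_prod]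

end Counting

theorem card_simple_maps_with_fixed_image_eq_card_simple_maps_on_intersection_mul
    {F V : Type*} [Field F] [Fintype F]
    [AddCommGroup V] [Module F V] [FiniteDimensional F V]
    (q n k : ℕ) (hq : Fintype.card F = q) (hkn : k < n)
    (hV : 2 * n - k ≤ Module.finrank F V)
    (W₁ W₂ : Submodule F V)
    (h1 : Module.finrank F W₁ = n) (h2 : Module.finrank F W₂ = n)
    (hZ : Module.finrank F ↥(W₁ ⊓ W₂) = k) :
    Nat.card {T : W₁ →ₗ[F] V // IsSimple W₁ T ∧ LinearMap.range T = W₂} =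
      Nat.card {S : ↥((W₁ ⊓ W₂).comap W₂.subtype) →ₗ[F] W₂ //
          IsSimple ((W₁ ⊓ W₂).comap W₂.subtype) S} *
        ∏ i ∈ Finset.Ico k n, (q ^ n - q ^ i) := by
  classical
  subst hq
  set Z' : Submodule F W₂ := (W₁ ⊓ W₂).comap W₂.subtype with hZ'def
  have haveV : Finite V := Module.finite_of_finite F
  have hnV : n < finrank F V := lt_of_lt_of_le (by omega) hV
  -- finrank of Z'
  have hZ'k : finrank F Z' = k := by
    rw [LinearEquiv.finrank_eq (Submodule.comapSubtypeEquivOfLe inf_le_right)]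
    exact hZ
  -- the inclusion ι : Z' →ₗ W₁
  let ι : Z' →ₗ[F] W₁ :=
    LinearMap.codRestrict W₁ (W₂.subtype.comp Z'.subtype) (fun z => z.2.1)
  have hι : ∀ z : Z', ((ι z : W₁) : V) = ((z : W₂) : V) := fun z => rfl
  have hιinj : Function.Injective ι := by
    intro a b hab
    apply Subtype.ext; apply Subtype.ext
    have := congrArg (fun x : W₁ => (x : V)) hab
    simpa [hι] using this
  -- any submodule of V contained in W₁ or of finrank ≤ n is not ⊤
  have hne_top : ∀ U : Submodule F V, finrank F U ≤ n → U ≠ ⊤ := by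
    intro U hU h
    rw [h, finrank_top] at hU
    omega
  have hne_top₂ : ∀ U : Submodule F W₂, U ≤ Z' → U ≠ ⊤ := by
    intro U hU h
    have := Submodule.finrank_mono hU
    rw [h, hZ'k, finrank_top, h2] at this
    omega
  -- range T = W₂ forces T injective
  have hTinj : ∀ T : W₁ →ₗ[F] V, LinearMap.range T = W₂ → Function.Injective T := by
    intro T hT
    rw [← LinearMap.ker_eq_bot]
    have h := LinearMap.finrank_range_add_finrank_ker T
    rw [hT, h2, h1] at h
    exact Submodule.finrank_eq_zero.mp (by omega)
  -- simple maps are injective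
  have hSinj : ∀ S : Z' →ₗ[F] W₂, IsSimple Z' S → Function.Injective S := by
    intro S hS
    rw [← LinearMap.ker_eq_bot]
    have hbot := hS ((LinearMap.ker S).map Z'.subtype)
      (Submodule.map_subtype_le _ _)
      (by
        rintro z ⟨w, hw, hwz⟩
        have hzw : z = w := Subtype.ext hwz.symm
        rw [hzw] at *
        have : S w = 0 := hw
        rw [this]
        exact Submodule.zero_mem _)
      (hne_top₂ _ (Submodule.map_subtype_le _ _))
    rw [Submodule.eq_bot_iff]
    intro x hx
    have : (x : W₂) ∈ ((LinearMap.ker S).map Z'.subtype) := ⟨x, hx, rfl⟩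
    rw [hbot] at this
    exact Subtype.ext (Submodule.mem_bot F |>.mp this)
  -- correspondence of simplicity
  have hcorr : ∀ (T : W₁ →ₗ[F] V) (S : Z' →ₗ[F] W₂),
      LinearMap.range T = W₂ → (∀ z : Z', T (ι z) = ((S z : W₂) : V)) →
      (IsSimple W₁ T ↔ IsSimple Z' S) := by
    intro T S hT hres
    have hTi := hTinj T hT
    constructor
    · intro hsimp U' hU'le hU'inv hU'ne
      set U : Submodule F V := U'.map W₂.subtype with hUdef
      have hUW₁ : U ≤ W₁ := by
        rintro x ⟨u, hu, rfl⟩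
        exact (hU'le hu).1
      have hUinv : ∀ x : W₁, (x : V) ∈ U → T x ∈ U := by
        rintro x ⟨u, hu, hux⟩
        have hxι : x = ι ⟨u, hU'le hu⟩ := Subtype.ext (by simpa [hι] using hux.symm)
        rw [hxι, hres ⟨u, hU'le hu⟩]
        exact ⟨S ⟨u, hU'le hu⟩, hU'inv ⟨u, hU'le hu⟩ hu, rfl⟩
      have hUne : U ≠ ⊤ := hne_top U (le_trans (Submodule.finrank_mono hUW₁) (le_of_eq h1))
      have hUbot := hsimp U hUW₁ hUinv hUne
      rw [Submodule.eq_bot_iff]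
      intro u hu
      have : (u : V) ∈ U := ⟨u, hu, rfl⟩
      rw [hUbot] at this
      exact Subtype.ext (Submodule.mem_bot F |>.mp this)
    · intro hS U hUle hUinv hUne
      set U' : Submodule F W₂ := (U ⊓ (W₁ ⊓ W₂)).comap W₂.subtype with hU'def
      have hU'le : U' ≤ Z' := fun u hu => hu.2
      have hU'inv : ∀ z : Z', (z : W₂) ∈ U' → S z ∈ U' := by
        intro z hz
        have hTz : T (ι z) ∈ U := hUinv (ι z) hz.1
        have hTm₂ : T (ι z) ∈ W₂ := hT ▸ LinearMap.mem_range_self T (ι z)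
        have hTm₁ : T (ι z) ∈ W₁ := hUle hTz
        show ((S z : W₂) : V) ∈ U ⊓ (W₁ ⊓ W₂)
        rw [← hres z]
        exact ⟨hTz, hTm₁, hTm₂⟩
      have hU'bot := hS U' hU'le hU'inv (hne_top₂ U' hU'le)
      rw [Submodule.eq_bot_iff]
      intro x hx
      have hx₁ : x ∈ W₁ := hUle hx
      have h3 : T ⟨x, hx₁⟩ ∈ U := hUinv ⟨x, hx₁⟩ hx
      have h4 : T ⟨x, hx₁⟩ ∈ W₂ := hT ▸ LinearMap.mem_range_self _ _
      have h5 : (⟨T ⟨x, hx₁⟩, h4⟩ : W₂) ∈ U' := ⟨h3, hUle h3, h4⟩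
      rw [hU'bot] at h5
      have h6 : T ⟨x, hx₁⟩ = 0 := by
        have := Submodule.mem_bot F |>.mp h5
        exact congrArg Subtype.val this
      have h7 : (⟨x, hx₁⟩ : W₁) = 0 := hTi (by rw [h6, map_zero])
      have := congrArg (fun y : W₁ => (y : V)) h7
      simpa using this
  -- the sigma decomposition
  set A := {T : W₁ →ₗ[F] V // IsSimple W₁ T ∧ LinearMap.range T = W₂} with hAdef
  set B := {S : Z' →ₗ[F] W₂ // IsSimple Z' S} with hBdef
  let Fib : (Z' →ₗ[F] W₂) → Type _ := fun S =>
    {T : W₁ →ₗ[F] V // LinearMap.range T = W₂ ∧ ∀ z : Z', T (ι z) = ((S z : W₂) : V)}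
  have hmemρ : ∀ (a : A) (z : Z'), (a.1 ∘ₗ ι) z ∈ W₂ := by
    intro a z
    have h := LinearMap.mem_range_self a.1 (ι z)
    rwa [a.2.2] at h
  let ρ : A → B := fun a =>
    ⟨LinearMap.codRestrict W₂ (a.1 ∘ₗ ι) (hmemρ a),
      (hcorr a.1 _ a.2.2 (fun _ => rfl)).mp a.2.1⟩
  have e2 : ∀ S : B, {a : A // ρ a = S} ≃ Fib S.1 := fun S =>
  { toFun := fun p => ⟨p.1.1, p.1.2.2, fun z => congrArg Subtype.val (LinearMap.congr_fun (congrArg Subtype.val p.2) z)⟩,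
    invFun := fun t =>
      ⟨⟨t.1, (hcorr t.1 S.1 t.2.1 t.2.2).mpr S.2, t.2.1⟩,
        Subtype.ext (LinearMap.ext fun z => Subtype.ext (t.2.2 z))⟩,
    left_inv := fun _ => rfl,
    right_inv := fun _ => rfl }
  have eA : A ≃ Σ S : B, Fib S.1 :=
    (Equiv.sigmaFiberEquiv ρ).symm.trans (Equiv.sigmaCongrRight e2)
  -- fiber count
  have hfib : ∀ S : Z' →ₗ[F] W₂, Function.Injective S →
      Nat.card (Fib S) = ∏ i ∈ Finset.Ico k n, (Fintype.card F ^ n - Fintype.card F ^ i) := by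
    intro S hSi
    obtain ⟨C, hC⟩ := Submodule.exists_isCompl (LinearMap.range ι)
    have hZ₁ : finrank F (LinearMap.range ι) = k := by
      rw [LinearMap.finrank_range_of_inj hιinj]; exact hZ'k
    have hCrank : finrank F C = n - k := by
      have := Submodule.finrank_add_eq_of_isCompl hC
      rw [hZ₁, h1] at this
      omega
    set R : Submodule F W₂ := LinearMap.range S with hRdef
    have hRrank : finrank F R = k := by
      rw [LinearMap.finrank_range_of_inj hSi]; exact hZ'k
    have hQrank : finrank F (W₂ ⧸ R) = n - k := by
      have := Submodule.finrank_quotient_add_finrank R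
      rw [hRrank, h2] at this
      omega
    -- the equiv E1 : Fib S ≃ {T' : W₁ →ₗ W₂ // Inj ∧ agrees with S}
    have hE1mem : ∀ (t : Fib S) (x : W₁), t.1 x ∈ W₂ := by
      intro t x
      have h := LinearMap.mem_range_self t.1 x
      rwa [t.2.1] at h
    let E2 := {T' : W₁ →ₗ[F] W₂ // Function.Injective T' ∧ ∀ z : Z', T' (ι z) = S z}
    have e3 : Fib S ≃ E2 :=
    { toFun := fun t =>
        ⟨LinearMap.codRestrict W₂ t.1 (hE1mem t),
          fun a b hab => hTinj t.1 t.2.1 (by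
            have := congrArg (fun y : W₂ => (y : V)) hab
            simpa using this),
          fun z => Subtype.ext (t.2.2 z)⟩,
      invFun := fun T' =>
        ⟨W₂.subtype ∘ₗ T'.1, by
          rw [LinearMap.range_comp]
          have hrt : LinearMap.range T'.1 = ⊤ :=
            Submodule.eq_top_of_finrank_eq
              (by rw [LinearMap.finrank_range_of_inj T'.2.1, h1, h2])
          rw [hrt, Submodule.map_subtype_top],
          fun z => congrArg Subtype.val (T'.2.2 z)⟩,
      left_inv := fun t => rfl,
      right_inv := fun T' => rfl }
    -- the equiv E2 ≃ E3
    let pZ := (LinearMap.range ι).linearProjOfIsCompl C hC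
    let pC := C.linearProjOfIsCompl (LinearMap.range ι) hC.symm
    let e' : Z' ≃ₗ[F] LinearMap.range ι := LinearEquiv.ofInjective ι hιinj
    have he' : ∀ z : Z', ((e' z : W₁)) = ι z := fun z => rfl
    have hιe' : ∀ w : LinearMap.range ι, ι (e'.symm w) = (w : W₁) := by
      intro w
      rw [← he' (e'.symm w), e'.apply_symm_apply]
    let g₀ : (LinearMap.range ι) →ₗ[F] W₂ := S ∘ₗ (e'.symm : LinearMap.range ι ≃ₗ[F] Z')
    have hg₀ : ∀ w : LinearMap.range ι, g₀ w = S (e'.symm w) := fun w => rfl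
    let E3 := {T₂ : C →ₗ[F] W₂ // Function.Injective (R.mkQ ∘ₗ T₂)}
    have hsum : ∀ x : W₁, ((pZ x : W₁)) + ((pC x : W₁)) = x := fun x =>
      Submodule.projection_add_projection_eq_self hC x
    have e4 : E2 ≃ E3 := by
      refine
      { toFun := fun T' => ⟨T'.1 ∘ₗ C.subtype, ?_⟩,
        invFun := fun T₂ => ⟨g₀ ∘ₗ pZ + T₂.1 ∘ₗ pC, ?_, ?_⟩,
        left_inv := ?_, right_inv := ?_ }
      · -- injectivity of mkQ ∘ T₂
        rw [← LinearMap.ker_eq_bot, Submodule.eq_bot_iff]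
        intro c hc
        have hc' : R.mkQ (T'.1 (C.subtype c)) = 0 := hc
        rw [Submodule.mkQ_apply, Submodule.Quotient.mk_eq_zero] at hc'
        obtain ⟨z, hz⟩ := hc'
        have : T'.1 (ι z) = T'.1 (C.subtype c) := by rw [T'.2.2 z, hz]
        have hiz : ι z = C.subtype c := T'.2.1 this
        have hmemboth : (c : W₁) ∈ (LinearMap.range ι) ⊓ C :=
          ⟨⟨z, by rw [hiz]; rfl⟩, c.2⟩
        rw [hC.inf_eq_bot] at hmemboth
        exact Subtype.ext (Submodule.mem_bot F |>.mp hmemboth)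
      · -- injectivity of combined map
        rw [← LinearMap.ker_eq_bot, Submodule.eq_bot_iff]
        intro x hx
        have hx' : g₀ (pZ x) + T₂.1 (pC x) = 0 := hx
        have hmk : R.mkQ (g₀ (pZ x)) = 0 := by
          rw [Submodule.mkQ_apply, Submodule.Quotient.mk_eq_zero]
          exact ⟨e'.symm (pZ x), rfl⟩
        have hmk2 : R.mkQ (T₂.1 (pC x)) = 0 := by
          have := congrArg R.mkQ hx'
          rw [map_add, map_zero, hmk, zero_add] at this
          exact this
        have hpC : pC x = 0 := by
          have h0 : (R.mkQ ∘ₗ T₂.1) (pC x) = (R.mkQ ∘ₗ T₂.1) 0 := by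
            simpa using hmk2
          exact T₂.2 h0
        have hg0 : g₀ (pZ x) = 0 := by
          rw [hpC, map_zero, add_zero] at hx'
          exact hx'
        have hpZ : pZ x = 0 := by
          have h0 : S (e'.symm (pZ x)) = S 0 := by simpa [hg₀] using hg0
          have := hSi h0
          have := congrArg e' this
          simpa using this
        have : (x : V) = 0 := by
          have hx0 : (x : W₁) = 0 := by
            have := hsum x
            rw [hpZ, hpC] at this
            simpa using this.symm
          exact congrArg Subtype.val hx0
        exact Subtype.ext this
      · -- agreement with S
        intro z
        have h1' : pZ (ι z) = e' z := by
          have : ι z = ((e' z : W₁)) := rfl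
          rw [this]
          exact Submodule.linearProjOfIsCompl_apply_left hC (e' z)
        have h2' : pC (ι z) = 0 := by
          have : ι z = ((e' z : W₁)) := rfl
          rw [this]
          exact Submodule.linearProjOfIsCompl_apply_right hC.symm (e' z)
        show g₀ (pZ (ι z)) + T₂.1 (pC (ι z)) = S z
        rw [h1', h2', map_zero, add_zero, hg₀, e'.symm_apply_apply]
      · -- left inverse
        intro T'
        apply Subtype.ext
        apply LinearMap.ext
        intro x
        show g₀ (pZ x) + T'.1 (C.subtype (pC x)) = T'.1 x
        have hgg : g₀ (pZ x) = T'.1 ((pZ x : W₁)) := by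
          rw [hg₀, ← T'.2.2 (e'.symm (pZ x)), hιe']
        rw [hgg]
        have : T'.1 ((pZ x : W₁)) + T'.1 ((pC x : W₁)) = T'.1 x := by
          rw [← map_add, hsum]
        exact this
      · -- right inverse
        intro T₂
        apply Subtype.ext
        apply LinearMap.ext
        intro c
        show g₀ (pZ (C.subtype c)) + T₂.1 (pC (C.subtype c)) = T₂.1 c
        have hzc : pZ (C.subtype c) = 0 :=
          Submodule.linearProjOfIsCompl_apply_right hC c
        have hcc : pC (C.subtype c) = c :=
          Submodule.linearProjOfIsCompl_apply_left hC.symm c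
        rw [hzc, hcc, map_zero, zero_add]
    -- now count E3
    rw [Nat.card_congr (e3.trans e4)]
    rw [card_comp_mkQ_inj R]
    have hinjcard : Nat.card {g : C →ₗ[F] (W₂ ⧸ R) // Function.Injective g} =
        ∏ i ∈ Finset.range (n - k), (Fintype.card F ^ (n - k) - Fintype.card F ^ i) := by
      rw [card_inj_linearMaps (by rw [hCrank, hQrank]), hCrank, hQrank]
    have hhomcard : Nat.card (C →ₗ[F] R) = Fintype.card F ^ ((n - k) * k) := by
      have : Finite (C →ₗ[F] R) := Module.finite_of_finite F
      letI := Fintype.ofFinite (C →ₗ[F] R)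
      rw [Nat.card_eq_fintype_card, card_eq_pow_finrank (K := F), Module.finrank_linearMap,
        hCrank, hRrank]
    rw [hinjcard, hhomcard]
    -- arithmetic
    rw [Finset.prod_Ico_eq_prod_range]
    have harith : ∀ i, (Fintype.card F ^ (n - k) - Fintype.card F ^ i) * Fintype.card F ^ k =
        Fintype.card F ^ n - Fintype.card F ^ (k + i) := by
      intro i
      rw [Nat.sub_mul, ← pow_add, ← pow_add, Nat.sub_add_cancel hkn.le, add_comm i k]
    calc (∏ i ∈ Finset.range (n - k), (Fintype.card F ^ (n - k) - Fintype.card F ^ i)) *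
          Fintype.card F ^ ((n - k) * k)
        = ∏ i ∈ Finset.range (n - k),
            ((Fintype.card F ^ (n - k) - Fintype.card F ^ i) * Fintype.card F ^ k) := by
          rw [Finset.prod_mul_distrib, Finset.prod_const, Finset.card_range, ← pow_mul,
            Nat.mul_comm k (n - k)]
      _ = ∏ i ∈ Finset.range (n - k), (Fintype.card F ^ n - Fintype.card F ^ (k + i)) :=
          Finset.prod_congr rfl (fun i _ => harith i)
  -- put everything together
  have : Finite (W₁ →ₗ[F] V) := Module.finite_of_finite F
  have : Finite (Z' →ₗ[F] W₂) := Module.finite_of_finite F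
  letI := Fintype.ofFinite B
  letI : ∀ S : B, Fintype (Fib S.1) := fun S => Fintype.ofFinite _
  rw [Nat.card_congr eA, Nat.card_eq_fintype_card, Fintype.card_sigma]
  have hconst : ∀ S : B, Fintype.card (Fib S.1) =
      ∏ i ∈ Finset.Ico k n, (Fintype.card F ^ n - Fintype.card F ^ i) := by
    intro S
    rw [← Nat.card_eq_fintype_card]
    exact hfib S.1 (hSinj S.1 S.2)
  rw [Finset.sum_congr rfl (fun S _ => hconst S), Finset.sum_const, Finset.card_univ,
    Nat.card_eq_fintype_card, smul_eq_mul]
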